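/- arXiv:1708.01442 — 2 statements merged into one kernel-verified Lean document; each statement's English description precedes it below -/
import Mathlib

section
/- Let n ≥ 1, let e, e_f, σ ∈ ℝⁿ with e_f ≠ 0, let G, Ω be real symmetric positive definite n×n matrices, and let s ≥ 0. Let Θ* = (θ₀*, θ₁*, θ₂*) with θᵢ* ≥ 0 and suppose ‖σ‖ ≤ θ₀* + θ₁* s + θ₂* s². Let Θ̂ = (θ̂₀, θ̂₁, θ̂₂) ∈ ℝ³ and γ ∈ ℝ be arbitrary, write Y = (1, s, s²), and set ρ̂ = YᵀΘ̂ + γ. Then −e_fᵀ G e_f − eᵀ Ω e + e_fᵀ( −ρ̂ e_f/‖e_f‖ + σ ) + Yᵀ(Θ̂ − Θ*) ‖e_f‖ + γ ‖e_f‖ ≤ −λ_min(G)‖e_f‖² − λ_min(Ω)‖e‖². -/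
noncomputable def matVec {n : ℕ} (A : Matrix (Fin n) (Fin n) ℝ)
    (x : EuclideanSpace ℝ (Fin n)) : EuclideanSpace ℝ (Fin n) :=
  Matrix.toEuclideanCLM (𝕜 := ℝ) A x

/-- Real inner product `xᵀ y` on Euclidean space. -/
noncomputable def dotE {n : ℕ} (x y : EuclideanSpace ℝ (Fin n)) : ℝ := inner ℝ x y

/-- Minimum eigenvalue of a Hermitian (real symmetric) matrix. -/
noncomputable def lamMin {n : ℕ} (A : Matrix (Fin n) (Fin n) ℝ) (hA : A.IsHermitian) : ℝ :=
  ⨅ i, hA.eigenvalues i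

lemma matVec_eq_lin {n : ℕ} (A : Matrix (Fin n) (Fin n) ℝ) (x : EuclideanSpace ℝ (Fin n)) :
    matVec A x = Matrix.toEuclideanLin A x := by
  rw [matVec, ← Matrix.coe_toEuclideanCLM_eq_toEuclideanLin]
  rfl

lemma rayleigh_min {n : ℕ} (A : Matrix (Fin n) (Fin n) ℝ) (hA : A.IsHermitian)
    (x : EuclideanSpace ℝ (Fin n)) :
    lamMin A hA * ‖x‖ ^ 2 ≤ dotE x (matVec A x) := by
  have hsym : A.toEuclideanLin.IsSymmetric := Matrix.isHermitian_iff_isSymmetric.1 hA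
  set b := hA.eigenvectorBasis with hb
  have heig : ∀ i, matVec A (b i) = hA.eigenvalues i • b i := by
    intro i
    have h1 := hA.mulVec_eigenvectorBasis i
    apply (WithLp.equiv 2 _).injective
    rw [matVec, WithLp.equiv_apply, WithLp.equiv_apply, Matrix.ofLp_toEuclideanCLM]
    simpa using h1
  have key : dotE x (matVec A x) = ∑ i, hA.eigenvalues i * (inner ℝ x (b i) : ℝ) ^ 2 := by
    rw [dotE, ← b.sum_inner_mul_inner x (matVec A x)]
    congr 1
    funext i
    have : (inner ℝ (b i) (matVec A x) : ℝ) = hA.eigenvalues i * inner ℝ x (b i) := by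
      rw [matVec_eq_lin, ← hsym (b i) x, ← matVec_eq_lin, heig i, inner_smul_left,
        real_inner_comm]
      simp
    rw [this]; ring
  have hnorm : ‖x‖ ^ 2 = ∑ i, (inner ℝ x (b i) : ℝ) ^ 2 := by
    have := b.sum_inner_mul_inner x x
    rw [← real_inner_self_eq_norm_sq, ← this]
    congr 1; funext i; rw [real_inner_comm (b i) x]; ring
  rw [key, hnorm, Finset.mul_sum]
  apply Finset.sum_le_sum
  intro i _
  have hle : lamMin A hA ≤ hA.eigenvalues i := ciInf_le (Finite.bddBelow_range _) i
  nlinarith [sq_nonneg ((inner ℝ x (b i)) : ℝ)]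

theorem case1_increasing_gains_bound {n : ℕ} (hn : 1 ≤ n)
    (e ef σ : EuclideanSpace ℝ (Fin n)) (hef : ef ≠ 0)
    (G Ω : Matrix (Fin n) (Fin n) ℝ) (hG : G.PosDef) (hΩ : Ω.PosDef)
    (s : ℝ) (hs : 0 ≤ s)
    (θ0s θ1s θ2s : ℝ) (hθ0s : 0 ≤ θ0s) (hθ1s : 0 ≤ θ1s) (hθ2s : 0 ≤ θ2s)
    (hσ : ‖σ‖ ≤ θ0s + θ1s * s + θ2s * s ^ 2)
    (θ0 θ1 θ2 γ : ℝ)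
    (ρ : ℝ) (hρ : ρ = (θ0 + θ1 * s + θ2 * s ^ 2) + γ) :
    -dotE ef (matVec G ef) - dotE e (matVec Ω e)
      + dotE ef (-((ρ / ‖ef‖) • ef) + σ)
      + ((θ0 - θ0s) + (θ1 - θ1s) * s + (θ2 - θ2s) * s ^ 2) * ‖ef‖
      + γ * ‖ef‖ ≤
      -(lamMin G hG.isHermitian) * ‖ef‖ ^ 2 - lamMin Ω hΩ.isHermitian * ‖e‖ ^ 2 := by
  have hefn : (0:ℝ) < ‖ef‖ := norm_pos_iff.mpr hef
  have hsplit : dotE ef (-((ρ / ‖ef‖) • ef) + σ) = -(ρ * ‖ef‖) + inner ℝ ef σ := by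
    rw [dotE, inner_add_right, inner_neg_right, real_inner_smul_right,
      real_inner_self_eq_norm_sq]
    field_simp
  have hcs : (inner ℝ ef σ : ℝ) ≤ ‖ef‖ * ‖σ‖ := real_inner_le_norm ef σ
  have h1 := rayleigh_min G hG.isHermitian ef
  have h2 := rayleigh_min Ω hΩ.isHermitian e
  rw [hsplit, hρ]
  nlinarith [mul_le_mul_of_nonneg_left hσ hefn.le]
end

section
/- Let n ≥ 1, let e, e_f, σ ∈ ℝⁿ with e_f ≠ 0, let G, Ω be real symmetric positive definite n×n matrices, and let s ≥ 0 and g > 0 satisfy ‖e_f‖ ≤ g s. Let θ₀*, θ₁*, θ₂* ≥ 0 with ‖σ‖ ≤ θ₀* + θ₁* s + θ₂* s², let θ̂₀, θ̂₁, θ̂₂ ≥ 0, let ς > 0 and γ ≥ β > 0, write Y = (1, s, s²), Θ̂ = (θ̂₀, θ̂₁, θ̂₂), Θ* = (θ₀*, θ₁*, θ₂*), and set ρ̂ = YᵀΘ̂ + γ. Then −e_fᵀ G e_f − eᵀ Ω e + e_fᵀ( −ρ̂ e_f/‖e_f‖ + σ ) − Yᵀ(Θ̂ − Θ*) ‖e_f‖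 − ς γ s⁴ ≤ −λ_min(G)‖e_f‖² − λ_min(Ω)‖e‖² − ς β s⁴ + 2 g ( θ₀* s + θ₁* s² + θ₂* s³ ). -/
lemma lamMin_mul_le {n : ℕ} (hn : 1 ≤ n) (A : Matrix (Fin n) (Fin n) ℝ)
    (hA : A.IsHermitian) (x : EuclideanSpace ℝ (Fin n)) :
    lamMin A hA * ‖x‖ ^ 2 ≤ dotE x (matVec A x) := by
  haveI : Nonempty (Fin n) := ⟨⟨0, hn⟩⟩
  set b := hA.eigenvectorBasis
  set lam := hA.eigenvalues
  have hb : ∀ i, matVec A (b i) = lam i • (b i) := by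
    intro i
    have := hA.mulVec_eigenvectorBasis i
    apply PiLp.ext
    intro j
    have h1 : (matVec A (b i) : Fin n → ℝ) = A.mulVec (b i) := rfl
    rw [h1]
    exact congrFun this j
  have hxsum : x = ∑ i, b.repr x i • b i := (b.sum_repr x).symm
  have hAx : matVec A x = ∑ i, (b.repr x i * lam i) • b i := by
    conv_lhs => rw [hxsum]
    simp only [matVec] at hb ⊢
    rw [map_sum]
    simp [hb, smul_smul]
  have hinner : dotE x (matVec A x) = ∑ i, lam i * (b.repr x i) ^ 2 := by
    rw [dotE, hAx, inner_sum]
    congr 1; ext i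
    rw [real_inner_smul_right, real_inner_comm, ← b.repr_apply_apply]
    ring
  have hnorm : ‖x‖ ^ 2 = ∑ i, (b.repr x i) ^ 2 := by
    rw [← b.repr.norm_map x, EuclideanSpace.norm_eq]
    rw [Real.sq_sqrt (by positivity)]
    simp [sq_abs]
  rw [hinner, hnorm, Finset.mul_sum]
  apply Finset.sum_le_sum
  intro i _
  have : lamMin A hA ≤ lam i := ciInf_le (Finite.bddBelow_range _) i
  nlinarith [sq_nonneg (b.repr x i)]

theorem case2_decreasing_gains_bound {n : ℕ} (hn : 1 ≤ n)
    (e ef σ : EuclideanSpace ℝ (Fin n)) (hef : ef ≠ 0)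
    (G Ω : Matrix (Fin n) (Fin n) ℝ) (hG : G.PosDef) (hΩ : Ω.PosDef)
    (s g : ℝ) (hs : 0 ≤ s) (hg : 0 < g) (hefs : ‖ef‖ ≤ g * s)
    (θ0s θ1s θ2s : ℝ) (hθ0s : 0 ≤ θ0s) (hθ1s : 0 ≤ θ1s) (hθ2s : 0 ≤ θ2s)
    (hσ : ‖σ‖ ≤ θ0s + θ1s * s + θ2s * s ^ 2)
    (θ0 θ1 θ2 : ℝ) (hθ0 : 0 ≤ θ0) (hθ1 : 0 ≤ θ1) (hθ2 : 0 ≤ θ2)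
    (ς γ β : ℝ) (hς : 0 < ς) (hβ : 0 < β) (hγ : β ≤ γ)
    (ρ : ℝ) (hρ : ρ = (θ0 + θ1 * s + θ2 * s ^ 2) + γ) :
    -dotE ef (matVec G ef) - dotE e (matVec Ω e)
      + dotE ef (-((ρ / ‖ef‖) • ef) + σ)
      - ((θ0 - θ0s) + (θ1 - θ1s) * s + (θ2 - θ2s) * s ^ 2) * ‖ef‖
      - ς * γ * s ^ 4 ≤
      -(lamMin G hG.isHermitian) * ‖ef‖ ^ 2 - lamMin Ω hΩ.isHermitian * ‖e‖ ^ 2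
        - ς * β * s ^ 4 + 2 * g * (θ0s * s + θ1s * s ^ 2 + θ2s * s ^ 3) := by

  have key1 := lamMin_mul_le hn G hG.isHermitian ef
  have key2 := lamMin_mul_le hn Ω hΩ.isHermitian e
  have hefn : (0:ℝ) < ‖ef‖ := norm_pos_iff.mpr hef
  have hdot : dotE ef (-((ρ / ‖ef‖) • ef) + σ) = -(ρ * ‖ef‖) + dotE ef σ := by
    rw [dotE, inner_add_right, inner_neg_right, real_inner_smul_right,
      real_inner_self_eq_norm_sq]
    rw [dotE]
    congr 1
    field_simp
  have hcs : dotE ef σ ≤ ‖ef‖ * ‖σ‖ := real_inner_le_norm ef σ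
  have hσ' : dotE ef σ ≤ ‖ef‖ * (θ0s + θ1s * s + θ2s * s ^ 2) :=
    hcs.trans (by nlinarith)
  have hT : 0 ≤ θ0 + θ1 * s + θ2 * s ^ 2 := by positivity
  have hS : 0 ≤ θ0s + θ1s * s + θ2s * s ^ 2 := by positivity
  have hγ0 : 0 < γ := hβ.trans_le hγ
  have hSgs : (θ0s + θ1s * s + θ2s * s ^ 2) * ‖ef‖ ≤
      (θ0s + θ1s * s + θ2s * s ^ 2) * (g * s) := by
    exact mul_le_mul_of_nonneg_left hefs hS
  rw [hdot, hρ]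
  nlinarith [mul_nonneg hT hefn.le, mul_pos hγ0 hefn, mul_nonneg hς.le (pow_nonneg hs 4)]
end
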